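/- arXiv:1602.07085 — 2 statements merged into one kernel-verified Lean document; each statement's English description precedes it below -/
import Mathlib

section
/- Let R be a commutative ring and λ ∈ R with λ² = 1. Let A, B, C, D be λ-circulant n×n matrices over R satisfying (i) A·Aᵀ + B·Bᵀ + C·Cᵀ + D·Dᵀ = -I_n, (ii) C·Dᵀ - D·Cᵀ = 0, and (iii) -A·D·J + B·C·J - C·J·B + D·J·A = 0, where J is the back-diagonal matrix of order n. Let M be the 4n×4n block matrix with block rows (A, B, CJ, DJ), (-Bᵀ, Aᵀ, DJ, -CJ), (-CJ, -DJ, A, B), (-DJ, CJ, -Bᵀ, Aᵀ). Then M·Mᵀ = -I_{4n}. -/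
open Matrix Polynomial

/-- The `l`-circulant matrix with first row `a`: each row is the `l`-cyclic
shift of the previous one (last entry wraps to the front multiplied by `l`). -/
def lamCirc {R : Type*} [CommRing R] (n : ℕ) (l : R) (a : Fin n → R) :
    Matrix (Fin n) (Fin n) R :=
  fun i j =>
    if h : (i : ℕ) ≤ (j : ℕ) then a ⟨(j : ℕ) - (i : ℕ), by have := j.isLt; omega⟩
    else l * a ⟨n + (j : ℕ) - (i : ℕ), by have := i.isLt; have := j.isLt; omega⟩

/-- `A` is an `l`-circulant matrix. -/
def IsLamCirc {R : Type*} [CommRing R] (n : ℕ) (l : R) (A : Matrix (Fin n) (Fin n) R) : Prop :=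
  ∃ a : Fin n → R, A = lamCirc n l a

/-- The back-diagonal permutation matrix `J` with `J_{i, n-i+1} = 1` (1-indexed). -/
def backDiag {R : Type*} [CommRing R] (n : ℕ) : Matrix (Fin n) (Fin n) R :=
  fun i j => if (i : ℕ) + (j : ℕ) + 1 = n then 1 else 0

section Aux
variable {R : Type*} [CommRing R] {n : ℕ} {l : R}

def lcF (n : ℕ) (l : R) (a : Fin n → R) (t : ℕ) : R :=
  if h : t < n then l * a ⟨t, h⟩ else if h2 : t - n < n then a ⟨t - n, h2⟩ else 0

lemma lcF_low (a : Fin n → R) {t : ℕ} (h : t < n) : lcF n l a t = l * a ⟨t, h⟩ := dif_pos h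

lemma lcF_add (a : Fin n → R) {t : ℕ} (h : t < n) : lcF n l a (t + n) = a ⟨t, h⟩ := by
  unfold lcF
  rw [dif_neg (by omega), dif_pos (show t + n - n < n by omega)]
  congr 1
  exact Fin.ext (by simp)

lemma lamCirc_eq_lcF (a : Fin n → R) (i j : Fin n) :
    lamCirc n l a i j = lcF n l a (n + (j : ℕ) - (i : ℕ)) := by
  have hi := i.isLt; have hj := j.isLt
  unfold lamCirc lcF
  split_ifs <;> first
    | rfl
    | (exfalso; omega)
    | (congr 1; exact Fin.ext (by simp; omega))

lemma lcF_swap (hl : l * l = 1) (a b : Fin n → R) {s t s' t' : ℕ}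
    (hs : s < 2 * n) (ht : t < 2 * n) (hs' : s' < 2 * n) (ht' : t' < 2 * n)
    (h : s = s' ∧ t = t' ∨ s = s' + n ∧ t + n = t' ∨ s + n = s' ∧ t = t' + n
       ∨ s = s' + n ∧ t = t' + n ∨ s + n = s' ∧ t + n = t') :
    lcF n l a s * lcF n l b t = lcF n l a s' * lcF n l b t' := by
  obtain ⟨h1, h2⟩ | ⟨h1, h2⟩ | ⟨h1, h2⟩ | ⟨h1, h2⟩ | ⟨h1, h2⟩ := h
  · subst h1; subst h2; rfl
  · subst h1; subst h2
    rw [lcF_add a (show s' < n by omega), lcF_add b (show t < n by omega),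
      lcF_low a (show s' < n by omega), lcF_low b (show t < n by omega)]
    ring
  · subst h1; subst h2
    rw [lcF_add a (show s < n by omega), lcF_add b (show t' < n by omega),
      lcF_low a (show s < n by omega), lcF_low b (show t' < n by omega)]
    ring
  · subst h1; subst h2
    rw [lcF_add a (show s' < n by omega), lcF_add b (show t' < n by omega),
      lcF_low a (show s' < n by omega), lcF_low b (show t' < n by omega)]
    linear_combination (- a ⟨s', by omega⟩ * b ⟨t', by omega⟩) * hl
  · subst h1; subst h2
    rw [lcF_add a (show s < n by omega), lcF_add b (show t < n by omega),
      lcF_low a (show s < n by omega), lcF_low b (show t < n by omega)]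
    linear_combination (a ⟨s, by omega⟩ * b ⟨t, by omega⟩) * hl

/-- The involution `k ↦ (i + j - k) mod n` on `Fin n`. -/
def sig {n : ℕ} (i j k : Fin n) : Fin n :=
  if h : (i : ℕ) + (j : ℕ) < (k : ℕ) then
    ⟨(i : ℕ) + (j : ℕ) + n - (k : ℕ), by have := k.isLt; omega⟩
  else if h2 : (i : ℕ) + (j : ℕ) - (k : ℕ) < n then ⟨(i : ℕ) + (j : ℕ) - (k : ℕ), h2⟩
  else ⟨(i : ℕ) + (j : ℕ) - (k : ℕ) - n, by have := i.isLt; have := j.isLt; omega⟩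

lemma sig_spec {n : ℕ} (i j k : Fin n) :
    ((sig i j k : ℕ) + (k : ℕ) = (i : ℕ) + (j : ℕ)) ∨
    ((sig i j k : ℕ) + (k : ℕ) = (i : ℕ) + (j : ℕ) + n) ∨
    ((sig i j k : ℕ) + (k : ℕ) + n = (i : ℕ) + (j : ℕ)) := by
  have := i.isLt; have := j.isLt; have := k.isLt
  unfold sig
  split_ifs <;> simp only [Fin.val_mk] <;> omega

lemma sig_invol {n : ℕ} (i j : Fin n) : Function.Involutive (sig i j) := by
  intro k
  have h1 := sig_spec i j k
  have h2 := sig_spec i j (sig i j k)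
  have := (sig i j (sig i j k)).isLt; have := (sig i j k).isLt; have := k.isLt
  exact Fin.ext (by omega)

lemma lamCirc_comm (hl : l * l = 1) (a b : Fin n → R) :
    lamCirc n l a * lamCirc n l b = lamCirc n l b * lamCirc n l a := by
  ext i j
  rw [Matrix.mul_apply, Matrix.mul_apply]
  refine (Fintype.sum_bijective (sig i j) (sig_invol i j).bijective _ _ fun k => ?_).symm
  have hi := i.isLt; have hj := j.isLt; have hk := k.isLt
  have hm := (sig i j k).isLt
  have hspec := sig_spec i j k
  rw [mul_comm, lamCirc_eq_lcF, lamCirc_eq_lcF, lamCirc_eq_lcF, lamCirc_eq_lcF]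
  exact lcF_swap hl a b (by omega) (by omega) (by omega) (by omega) (by omega)

lemma lamCirc_transpose_comm (hl : l * l = 1) (a b : Fin n → R) :
    lamCirc n l a * (lamCirc n l b)ᵀ = (lamCirc n l b)ᵀ * lamCirc n l a := by
  ext i j
  rw [Matrix.mul_apply, Matrix.mul_apply]
  refine (Fintype.sum_bijective (sig i j) (sig_invol i j).bijective _ _ fun k => ?_).symm
  have hi := i.isLt; have hj := j.isLt; have hk := k.isLt
  have hm := (sig i j k).isLt
  have hspec := sig_spec i j k
  simp only [transpose_apply]
  rw [mul_comm, lamCirc_eq_lcF, lamCirc_eq_lcF, lamCirc_eq_lcF, lamCirc_eq_lcF]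
  exact lcF_swap hl a b (by omega) (by omega) (by omega) (by omega) (by omega)

lemma backDiag_transpose : (backDiag n (R := R))ᵀ = backDiag n := by
  ext i j
  simp only [transpose_apply, backDiag,
    show ((j:ℕ) + (i:ℕ) + 1 = n) = ((i:ℕ) + (j:ℕ) + 1 = n) from propext (by omega)]

lemma backDiag_sq : (backDiag n (R := R)) * backDiag n = 1 := by
  ext i j
  rw [Matrix.mul_apply]
  rcases eq_or_ne i j with rfl | hne
  · have hi := i.isLt
    rw [Finset.sum_eq_single ⟨n - 1 - (i:ℕ), by omega⟩]
    · simp only [backDiag, Matrix.one_apply_eq]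
      rw [if_pos (by omega), if_pos (by omega), one_mul]
    · intro b _ hb
      simp only [backDiag]
      have : ¬ ((i:ℕ) + (b:ℕ) + 1 = n) := by
        intro h; exact hb (Fin.ext (by simp; omega))
      simp [this]
    · intro h; exact absurd (Finset.mem_univ _) h
  · have h1 : (1 : Matrix (Fin n) (Fin n) R) i j = 0 := by simp [Matrix.one_apply, hne]
    rw [h1, Finset.sum_eq_zero]
    intro b _
    simp only [backDiag]
    by_cases h : (i:ℕ) + (b:ℕ) + 1 = n
    · have : ¬ ((b:ℕ) + (j:ℕ) + 1 = n) := by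
        intro h2; exact hne (Fin.ext (by omega))
      simp [h, this]
    · simp [h]

lemma backDiag_mul_transpose (a : Fin n → R) :
    backDiag n * (lamCirc n l a)ᵀ = lamCirc n l a * backDiag n := by
  ext i j
  have hi := i.isLt; have hj := j.isLt
  rw [Matrix.mul_apply, Matrix.mul_apply]
  rw [Finset.sum_eq_single ⟨n - 1 - (i:ℕ), by omega⟩, Finset.sum_eq_single ⟨n - 1 - (j:ℕ), by omega⟩]
  · simp only [backDiag, transpose_apply, lamCirc]
    have h1 : (i:ℕ) + (n - 1 - (i:ℕ)) + 1 = n := by omega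
    have h2 : (n - 1 - (j:ℕ)) + (j:ℕ) + 1 = n := by omega
    simp only [h1, h2, if_true, if_pos, one_mul, mul_one]
    split_ifs with p q q <;> first
      | (exfalso; simp at *; omega)
      | (congr 1 <;> simp only [Fin.mk.injEq] <;> simp at * <;> omega)
      | (congr 2 <;> simp only [Fin.mk.injEq] <;> simp at * <;> omega)
  · intro b _ hb
    have : ¬ ((b:ℕ) + (j:ℕ) + 1 = n) := by
      intro h; exact hb (Fin.ext (by simp; omega))
    simp [backDiag, this]
  · intro h; exact absurd (Finset.mem_univ _) h
  · intro b _ hb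
    have : ¬ ((i:ℕ) + (b:ℕ) + 1 = n) := by
      intro h; exact hb (Fin.ext (by simp; omega))
    simp [backDiag, this]
  · intro h; exact absurd (Finset.mem_univ _) h

end Aux

/-- Construction II (variation of the short Kharaghani array): M·Mᵀ = -I. -/
theorem construction_II_matrix {R : Type*} [CommRing R] {n : ℕ} (l : R) (hl : l ^ 2 = 1)
    (A B C D : Matrix (Fin n) (Fin n) R)
    (hA : IsLamCirc n l A) (hB : IsLamCirc n l B)
    (hC : IsLamCirc n l C) (hD : IsLamCirc n l D)
    (h1 : A * Aᵀ + B * Bᵀ + C * Cᵀ + D * Dᵀ = -1)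
    (h2 : C * Dᵀ - D * Cᵀ = 0)
    (h3 : -(A * D * backDiag n) + B * C * backDiag n - C * backDiag n * B
        + D * backDiag n * A = 0) :
    let J : Matrix (Fin n) (Fin n) R := backDiag n
    let M : Matrix ((Fin n ⊕ Fin n) ⊕ (Fin n ⊕ Fin n)) ((Fin n ⊕ Fin n) ⊕ (Fin n ⊕ Fin n)) R :=
      Matrix.fromBlocks
        (Matrix.fromBlocks A B (-Bᵀ) Aᵀ)
        (Matrix.fromBlocks (C * J) (D * J) (D * J) (-(C * J)))
        (Matrix.fromBlocks (-(C * J)) (-(D * J)) (-(D * J)) (C * J))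
        (Matrix.fromBlocks A B (-Bᵀ) Aᵀ)
    M * Mᵀ = -1 := by
  intro J M
  have hl' : l * l = 1 := by rwa [pow_two] at hl
  obtain ⟨a, ha⟩ := hA; obtain ⟨b, hb⟩ := hB; obtain ⟨c, hc⟩ := hC; obtain ⟨d, hd⟩ := hD
  have hJt : Jᵀ = J := backDiag_transpose
  have hJJ : J * J = (1 : Matrix (Fin n) (Fin n) R) := backDiag_sq
  have hJA : J * Aᵀ = A * J := by rw [ha]; exact backDiag_mul_transpose a
  have hJB : J * Bᵀ = B * J := by rw [hb]; exact backDiag_mul_transpose b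
  have hJC : J * Cᵀ = C * J := by rw [hc]; exact backDiag_mul_transpose c
  have hJD : J * Dᵀ = D * J := by rw [hd]; exact backDiag_mul_transpose d
  have hJ' : ∀ X : Matrix (Fin n) (Fin n) R, J * Xᵀ = X * J → Xᵀ * J = J * X := by
    intro X h
    calc Xᵀ * J = (J * (J * Xᵀ)) * J := by rw [← Matrix.mul_assoc, hJJ, Matrix.one_mul]
      _ = (J * (X * J)) * J := by rw [h]
      _ = J * X := by
          rw [Matrix.mul_assoc, Matrix.mul_assoc, hJJ, Matrix.mul_one]
  have hJA' : Aᵀ * J = J * A := hJ' A hJA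
  have hJB' : Bᵀ * J = J * B := hJ' B hJB
  have hJC' : Cᵀ * J = J * C := hJ' C hJC
  have hJD' : Dᵀ * J = J * D := hJ' D hJD
  have symmJ : ∀ X : Matrix (Fin n) (Fin n) R, J * Xᵀ = X * J → (X * J)ᵀ = X * J := by
    intro X h; rw [Matrix.transpose_mul, hJt, h]
  have hCJt : (C * J)ᵀ = C * J := symmJ C hJC
  have hDJt : (D * J)ᵀ = D * J := symmJ D hJD
  have prodJJ : ∀ X Y : Matrix (Fin n) (Fin n) R,
      Yᵀ * J = J * Y → (X * J) * (Y * J) = X * Yᵀ := by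
    intro X Y h
    rw [Matrix.mul_assoc, ← Matrix.mul_assoc J Y J, ← h, Matrix.mul_assoc Yᵀ J J, hJJ,
      Matrix.mul_one]
  have hAB : A * B = B * A := by rw [ha, hb]; exact lamCirc_comm hl' a b
  have hAC : A * C = C * A := by rw [ha, hc]; exact lamCirc_comm hl' a c
  have hAD : A * D = D * A := by rw [ha, hd]; exact lamCirc_comm hl' a d
  have hBC : B * C = C * B := by rw [hb, hc]; exact lamCirc_comm hl' b c
  have hBD : B * D = D * B := by rw [hb, hd]; exact lamCirc_comm hl' b d
  have hAAt : A * Aᵀ = Aᵀ * A := by rw [ha]; exact lamCirc_transpose_comm hl' a a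
  have hBBt : B * Bᵀ = Bᵀ * B := by rw [hb]; exact lamCirc_transpose_comm hl' b b
  have hDAt : D * Aᵀ = Aᵀ * D := by rw [ha, hd]; exact lamCirc_transpose_comm hl' d a
  have hCBt : C * Bᵀ = Bᵀ * C := by rw [hb, hc]; exact lamCirc_transpose_comm hl' c b
  have hCAt : C * Aᵀ = Aᵀ * C := by rw [ha, hc]; exact lamCirc_transpose_comm hl' c a
  have hDBt : D * Bᵀ = Bᵀ * D := by rw [hb, hd]; exact lamCirc_transpose_comm hl' d b
  -- the consequence of h3 with the `J`s stripped
  have h3' : -(A * D) + B * C - C * Bᵀ + D * Aᵀ = 0 := by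
    have e1 : C * Bᵀ * J = C * J * B := by rw [Matrix.mul_assoc, hJB', ← Matrix.mul_assoc]
    have e2 : D * Aᵀ * J = D * J * A := by rw [Matrix.mul_assoc, hJA', ← Matrix.mul_assoc]
    have e : (-(A * D) + B * C - C * Bᵀ + D * Aᵀ) * J = 0 := by
      have expand : (-(A * D) + B * C - C * Bᵀ + D * Aᵀ) * J
          = -(A * D * J) + B * C * J - C * Bᵀ * J + D * Aᵀ * J := by noncomm_ring
      rw [expand, e1, e2]; exact h3
    calc -(A * D) + B * C - C * Bᵀ + D * Aᵀ
        = ((-(A * D) + B * C - C * Bᵀ + D * Aᵀ) * J) * J := by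
          rw [Matrix.mul_assoc, hJJ, Matrix.mul_one]
      _ = 0 := by rw [e, Matrix.zero_mul]
  set X : Matrix (Fin n ⊕ Fin n) (Fin n ⊕ Fin n) R := Matrix.fromBlocks A B (-Bᵀ) Aᵀ with hX
  set Y : Matrix (Fin n ⊕ Fin n) (Fin n ⊕ Fin n) R :=
    Matrix.fromBlocks (C * J) (D * J) (D * J) (-(C * J)) with hY
  have hneg1 : (-1 : Matrix (Fin n ⊕ Fin n) (Fin n ⊕ Fin n) R)
      = Matrix.fromBlocks (-1) (-0) (-0) (-1) := by
    rw [← Matrix.fromBlocks_neg, Matrix.fromBlocks_one]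
  have key1 : X * Xᵀ + Y * Yᵀ = -1 := by
    rw [hX, hY, Matrix.fromBlocks_transpose, Matrix.fromBlocks_transpose,
      Matrix.fromBlocks_multiply, Matrix.fromBlocks_multiply, Matrix.fromBlocks_add, hneg1]
    simp only [Matrix.transpose_neg, Matrix.transpose_transpose, hCJt, hDJt, Matrix.mul_neg,
      Matrix.neg_mul, neg_neg]
    refine Matrix.fromBlocks_inj.mpr ⟨?_, ?_, ?_, ?_⟩
    · rw [prodJJ C C hJC', prodJJ D D hJD', ← h1]; abel
    · have e : C * Dᵀ + -(D * Cᵀ) = 0 := by rw [← sub_eq_add_neg]; exact h2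
      rw [prodJJ C D hJD', prodJJ D C hJC', hAB, e]; abel
    · have e : D * Cᵀ + -(C * Dᵀ) = 0 := by
        rw [← sub_eq_add_neg, ← neg_sub, h2, neg_zero]
      have hABt : Aᵀ * Bᵀ = Bᵀ * Aᵀ := by
        rw [← Matrix.transpose_mul, ← Matrix.transpose_mul, hAB]
      rw [prodJJ D C hJC', prodJJ C D hJD', ← hABt, e, neg_zero]; abel
    · rw [prodJJ D D hJD', prodJJ C C hJC', ← hAAt, ← hBBt, ← h1]; abel
  have mulJt : ∀ X Z : Matrix (Fin n) (Fin n) R,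
      J * Zᵀ = Z * J → (X * J) * Zᵀ = X * Z * J := by
    intro X Z h; rw [Matrix.mul_assoc, h, ← Matrix.mul_assoc]
  have h3J : -(A * D * J) + B * C * J - C * J * B + D * J * A = 0 := h3
  have key2 : X * Yᵀ = Y * Xᵀ := by
    rw [hX, hY, Matrix.fromBlocks_transpose, Matrix.fromBlocks_transpose,
      Matrix.fromBlocks_multiply, Matrix.fromBlocks_multiply]
    simp only [Matrix.transpose_neg, Matrix.transpose_transpose, hCJt, hDJt, Matrix.mul_neg,
      Matrix.neg_mul, neg_neg]
    refine Matrix.fromBlocks_inj.mpr ⟨?_, ?_, ?_, ?_⟩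
    · rw [mulJt C A hJA, mulJt D B hJB, ← Matrix.mul_assoc A C J, ← Matrix.mul_assoc B D J,
        hAC, hBD]
    · have e0 : A * (D * J) + -(B * (C * J)) - (-(C * J * B) + D * J * A)
          = -(-(A * D * J) + B * C * J - C * J * B + D * J * A) := by noncomm_ring
      rw [h3J, neg_zero] at e0
      exact sub_eq_zero.mp e0
    · rw [mulJt D A hJA, mulJt C B hJB, ← Matrix.mul_assoc Bᵀ C J, ← Matrix.mul_assoc Aᵀ D J]
      have core : -(Bᵀ * C) + Aᵀ * D = D * A + -(C * B) := by
        rw [← hCBt, ← hDAt, ← hAD, ← hBC]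
        have e0 : -(C * Bᵀ) + D * Aᵀ - (A * D + -(B * C))
            = -(A * D) + B * C - C * Bᵀ + D * Aᵀ := by noncomm_ring
        rw [h3'] at e0
        exact sub_eq_zero.mp e0
      calc -(Bᵀ * C * J) + Aᵀ * D * J = (-(Bᵀ * C) + Aᵀ * D) * J := by noncomm_ring
        _ = (D * A + -(C * B)) * J := by rw [core]
        _ = D * A * J + -(C * B * J) := by noncomm_ring
    · have w1 : (D * J) * B = D * Bᵀ * J := by
        rw [Matrix.mul_assoc, ← hJB', ← Matrix.mul_assoc]
      have w2 : (C * J) * A = C * Aᵀ * J := by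
        rw [Matrix.mul_assoc, ← hJA', ← Matrix.mul_assoc]
      rw [w1, w2, ← Matrix.mul_assoc Bᵀ D J, ← Matrix.mul_assoc Aᵀ C J, hDBt, hCAt]
  have hM : M = Matrix.fromBlocks X Y (-Y) X := by
    rw [hX, hY, Matrix.fromBlocks_neg, neg_neg]
  have hneg1' : (-1 : Matrix ((Fin n ⊕ Fin n) ⊕ (Fin n ⊕ Fin n)) ((Fin n ⊕ Fin n) ⊕ (Fin n ⊕ Fin n)) R)
      = Matrix.fromBlocks (-1) (-0) (-0) (-1) := by
    rw [← Matrix.fromBlocks_neg, Matrix.fromBlocks_one]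
  show M * Mᵀ = -1
  rw [hM, Matrix.fromBlocks_transpose, Matrix.fromBlocks_multiply, hneg1']
  refine Matrix.fromBlocks_inj.mpr ⟨?_, ?_, ?_, ?_⟩
  · exact key1
  · rw [Matrix.transpose_neg, Matrix.mul_neg, key2]; simp
  · rw [Matrix.neg_mul, key2]; simp
  · rw [Matrix.transpose_neg, Matrix.mul_neg, Matrix.neg_mul, neg_neg, add_comm]
    exact key1
end

section
/- Let A, B, C, D be λ-circulant n×n matrices over a commutative ring R and J the back-diagonal matrix of order n. Then -A·C·J - B·D·J + C·J·Aᵀ + D·J·Bᵀ = 0 and -A·D·J + B·C·J - C·J·Bᵀ + D·J·Aᵀ = 0. -/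
open Matrix Polynomial

def finIdx (n : ℕ) [NeZero n] (i j : Fin n) : Fin n :=
  ⟨(n + (j : ℕ) - (i : ℕ)) % n, Nat.mod_lt _ (Nat.pos_of_ne_zero (NeZero.ne n))⟩

lemma lamCirc_apply {R : Type*} [CommRing R] {n : ℕ} [NeZero n] (l : R) (a : Fin n → R)
    (i j : Fin n) :
    lamCirc n l a i j = (if (i : ℕ) ≤ (j : ℕ) then 1 else l) * a (finIdx n i j) := by
  have hi := i.isLt; have hj := j.isLt
  unfold lamCirc finIdx
  split_ifs with h
  · rw [one_mul]
    congr 1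
    apply Fin.ext
    show (j : ℕ) - (i : ℕ) = (n + (j : ℕ) - (i : ℕ)) % n
    rw [Nat.mod_eq_sub_mod (by omega), Nat.mod_eq_of_lt (by omega)]
    omega
  · congr 2
    apply Fin.ext
    show n + (j : ℕ) - (i : ℕ) = (n + (j : ℕ) - (i : ℕ)) % n
    rw [Nat.mod_eq_of_lt (by omega)]

lemma lamCirc_mul_comm {R : Type*} [CommRing R] {n : ℕ} (l : R) (a c : Fin n → R) :
    lamCirc n l a * lamCirc n l c = lamCirc n l c * lamCirc n l a := by
  rcases Nat.eq_zero_or_pos n with hn | hn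
  · subst hn; ext i j; exact i.elim0
  haveI : NeZero n := ⟨hn.ne'⟩
  ext i j
  simp only [mul_apply]
  apply Fintype.sum_bijective (fun k => i + j - k)
  · exact Function.Involutive.bijective (fun k => by simp)
  intro k
  set m : Fin n := i + j - k with hm
  have hmk : m + k = i + j := by rw [hm]; abel
  clear_value m
  have hmod : ((m : ℕ) + (k : ℕ)) % n = ((i : ℕ) + (j : ℕ)) % n := by
    have := congrArg Fin.val hmk
    simpa [Fin.add_def] using this
  have hi := i.isLt; have hj := j.isLt; have hk := k.isLt; have hmlt := m.isLt
  have hcase : (m : ℕ) + (k : ℕ) = (i : ℕ) + (j : ℕ) ∨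
      (m : ℕ) + (k : ℕ) = (i : ℕ) + (j : ℕ) + n ∨
      (m : ℕ) + (k : ℕ) + n = (i : ℕ) + (j : ℕ) := by
    rcases Nat.lt_or_ge ((m : ℕ) + (k : ℕ)) n with h1 | h1 <;>
      rcases Nat.lt_or_ge ((i : ℕ) + (j : ℕ)) n with h2 | h2
    · rw [Nat.mod_eq_of_lt h1, Nat.mod_eq_of_lt h2] at hmod; omega
    · rw [Nat.mod_eq_of_lt h1, Nat.mod_eq_sub_mod h2,
        Nat.mod_eq_of_lt (by omega)] at hmod; omega
    · rw [Nat.mod_eq_sub_mod h1, Nat.mod_eq_of_lt (by omega),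
        Nat.mod_eq_of_lt h2] at hmod; omega
    · rw [Nat.mod_eq_sub_mod h1, Nat.mod_eq_of_lt (by omega),
        Nat.mod_eq_sub_mod h2, Nat.mod_eq_of_lt (by omega)] at hmod; omega
  show lamCirc n l a i k * lamCirc n l c k j = lamCirc n l c i m * lamCirc n l a m j
  rw [lamCirc_apply, lamCirc_apply, lamCirc_apply, lamCirc_apply]
  have ea : finIdx n i k = finIdx n m j := by
    apply Fin.ext
    show (n + (k : ℕ) - (i : ℕ)) % n = (n + (j : ℕ) - (m : ℕ)) % n
    rcases hcase with hc | hc | hc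
    · congr 1; omega
    · rw [show n + (k : ℕ) - (i : ℕ) = (n + (j : ℕ) - (m : ℕ)) + n by omega,
        Nat.add_mod_right]
    · rw [show n + (j : ℕ) - (m : ℕ) = (n + (k : ℕ) - (i : ℕ)) + n by omega,
        Nat.add_mod_right]
  have ec : finIdx n k j = finIdx n i m := by
    apply Fin.ext
    show (n + (j : ℕ) - (k : ℕ)) % n = (n + (m : ℕ) - (i : ℕ)) % n
    rcases hcase with hc | hc | hc
    · congr 1; omega
    · rw [show n + (m : ℕ) - (i : ℕ) = (n + (j : ℕ) - (k : ℕ)) + n by omega,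
        Nat.add_mod_right]
    · rw [show n + (j : ℕ) - (k : ℕ) = (n + (m : ℕ) - (i : ℕ)) + n by omega,
        Nat.add_mod_right]
  rw [ea, ec]
  have hs : (if (i : ℕ) ≤ (k : ℕ) then (1 : R) else l) *
        (if (k : ℕ) ≤ (j : ℕ) then (1 : R) else l) =
      (if (i : ℕ) ≤ (m : ℕ) then (1 : R) else l) *
        (if (m : ℕ) ≤ (j : ℕ) then (1 : R) else l) := by
    rcases hcase with hc | hc | hc <;> split_ifs
    all_goals try (exfalso; omega)
    all_goals ring
  linear_combination (a (finIdx n m j) * c (finIdx n i m)) * hs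

lemma mul_backDiag {R : Type*} [CommRing R] {n : ℕ} (M : Matrix (Fin n) (Fin n) R)
    (i j : Fin n) : (M * backDiag (R := R) n) i j = M i j.rev := by
  have h : ∀ k : Fin n, ((k : ℕ) + (j : ℕ) + 1 = n) ↔ k = j.rev := by
    intro k; rw [Fin.ext_iff, Fin.val_rev]; omega
  simp only [mul_apply, backDiag, mul_ite, mul_one, mul_zero, h]
  simp

lemma backDiag_mul {R : Type*} [CommRing R] {n : ℕ} (M : Matrix (Fin n) (Fin n) R)
    (i j : Fin n) : (backDiag (R := R) n * M) i j = M i.rev j := by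
  have h : ∀ k : Fin n, ((i : ℕ) + (k : ℕ) + 1 = n) ↔ k = i.rev := by
    intro k; rw [Fin.ext_iff, Fin.val_rev]; omega
  simp only [mul_apply, backDiag, ite_mul, one_mul, zero_mul, h]
  simp

lemma lamCirc_mul_backDiag {R : Type*} [CommRing R] {n : ℕ} (l : R) (a : Fin n → R) :
    lamCirc n l a * backDiag (R := R) n = backDiag (R := R) n * (lamCirc n l a)ᵀ := by
  ext i j
  rw [mul_backDiag, backDiag_mul, transpose_apply]
  have hi := i.isLt; have hj := j.isLt
  have hri := Fin.val_rev i; have hrj := Fin.val_rev j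
  simp only [lamCirc]
  split_ifs <;>
    first
      | (exfalso; omega)
      | (congr 2 <;> (try rw [Fin.ext_iff]) <;> simp <;> omega)

/-- `X * J * Yᵀ = Y * X * J` for λ-circulant `X`, `Y`. -/
lemma key {R : Type*} [CommRing R] {n : ℕ} (l : R) (X Y : Matrix (Fin n) (Fin n) R)
    (hX : IsLamCirc n l X) (hY : IsLamCirc n l Y) :
    X * backDiag n * Yᵀ = Y * X * backDiag n := by
  obtain ⟨x, rfl⟩ := hX
  obtain ⟨y, rfl⟩ := hY
  calc lamCirc n l x * backDiag n * (lamCirc n l y)ᵀ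
      = lamCirc n l x * (backDiag n * (lamCirc n l y)ᵀ) := by rw [mul_assoc]
    _ = lamCirc n l x * (lamCirc n l y * backDiag n) := by rw [lamCirc_mul_backDiag]
    _ = lamCirc n l x * lamCirc n l y * backDiag n := by rw [mul_assoc]
    _ = lamCirc n l y * lamCirc n l x * backDiag n := by rw [lamCirc_mul_comm]

/-- Off-diagonal block cancellations in the proof of Construction I. -/
theorem construction_I_block_cancellation {R : Type*} [CommRing R] {n : ℕ} (l : R)
    (A B C D : Matrix (Fin n) (Fin n) R)
    (hA : IsLamCirc n l A) (hB : IsLamCirc n l B)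
    (hC : IsLamCirc n l C) (hD : IsLamCirc n l D) :
    -(A * C * backDiag n) - B * D * backDiag n
      + C * backDiag n * Aᵀ + D * backDiag n * Bᵀ = 0 ∧
    -(A * D * backDiag n) + B * C * backDiag n
      - C * backDiag n * Bᵀ + D * backDiag n * Aᵀ = 0 := by
  constructor
  · rw [key l C A hC hA, key l D B hD hB]
    noncomm_ring
  · rw [key l C B hC hB, key l D A hD hA]
    noncomm_ring
end
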